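/- Let P be a digital net in base 2 with 2^m points whose matrix C_{1:s,1} has full row rank. Then the maximal gain coefficient is Γ = 2^{t*_{1:s}+s−1}, where t*_{1:s} = m+1 − min{|k| : k ∈ ℕ^s, C_{1:s,k} not full row rank}. -/

import Mathlib

open Finset

noncomputable section

/-- the `i`-th `b`-adic digit of a natural number `k`. -/
def ndigit (b k i : ℕ) : ℕ := k / b ^ i % b

/-- the `(i+1)`-st `b`-adic digit of a real number `x ∈ [0,1)`
(the unique expansion with infinitely many digits `≠ b-1`). -/
def rdigit (b : ℕ) (x : ℝ) (i : ℕ) : ℕ := (⌊(b : ℝ) ^ (i + 1) * x⌋).toNat % b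

/-- the primitive `b`-th root of unity `ω_b = exp(2πi/b)`. -/
def omg (b : ℕ) : ℂ := Complex.exp (2 * Real.pi * Complex.I / b)

/-- embed a digit (element of `Z_b`) into the finite field `F` via the bijection `φ`. -/
def toF {F : Type} [Field F] [Fintype F] (φ : Fin (Fintype.card F) ≃ F) (a : ℕ) : F :=
  φ ⟨a % Fintype.card F, Nat.mod_lt a Fintype.card_pos⟩

/-- map a field element back to a digit in `Z_b` via `φ⁻¹`. -/
def fromF {F : Type} [Field F] [Fintype F] (φ : Fin (Fintype.card F) ≃ F) (a : F) : ℕ :=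
  (φ.symm a : ℕ)

/-- the `k`-th `b`-adic Walsh function, `b = |F|`,
`wal_k(x) = ω_b^{φ⁻¹(φ(κ₀)φ(ξ₁)) + φ⁻¹(φ(κ₁)φ(ξ₂)) + ⋯}`. -/
def wal {F : Type} [Field F] [Fintype F] (φ : Fin (Fintype.card F) ≃ F) (k : ℕ) (x : ℝ) : ℂ :=
  omg (Fintype.card F) ^
    ∑ i ∈ Finset.range k,
      fromF φ (toF φ (ndigit (Fintype.card F) k i) * toF φ (rdigit (Fintype.card F) x i))

/-- the multivariate `b`-adic Walsh function `wal_k(x) = ∏_j wal_{k_j}(x_j)`. -/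
def walv {F : Type} [Field F] [Fintype F] {s : ℕ} (φ : Fin (Fintype.card F) ≃ F)
    (k : Fin s → ℕ) (x : Fin s → ℝ) : ℂ :=
  ∏ j, wal φ (k j) (x j)

/-- the `j`-th coordinate of the `h`-th point of the digital net with generating
matrices `C_1,…,C_s` (with `n` rows, `m` columns, rows of index `≥ n` unused). -/
def dnet {F : Type} [Field F] [Fintype F] {s m : ℕ} (φ : Fin (Fintype.card F) ≃ F)
    (C : Fin s → ℕ → Fin m → F) (n : ℕ) (h : ℕ) (j : Fin s) : ℝ :=
  ∑ i ∈ Finset.range n,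
    (fromF φ (∑ c, C j i c * toF φ (ndigit (Fintype.card F) h (c : ℕ))) : ℝ) /
      (Fintype.card F : ℝ) ^ (i + 1)

/-- membership in the dual net `P^⊥`:
`C_1^⊤ ν_n(k_1) + ⋯ + C_s^⊤ ν_n(k_s) = 0 ∈ F^m`. -/
def inDual {F : Type} [Field F] [Fintype F] {s m : ℕ} (φ : Fin (Fintype.card F) ≃ F)
    (C : Fin s → ℕ → Fin m → F) (n : ℕ) (k : Fin s → ℕ) : Prop :=
  ∀ c : Fin m,
    ∑ j, ∑ i ∈ Finset.range n, C j i c * toF φ (ndigit (Fintype.card F) (k j) i) = 0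

/-- `V(u,k) = {ℓ ∈ ℕ₀^s : ℓ_j < b^{k_j} if j ∈ u, ℓ_j = 0 otherwise}`. -/
def Vset (b : ℕ) {s : ℕ} (u : Finset (Fin s)) (k : Fin s → ℕ) : Finset (Fin s → ℕ) :=
  Fintype.piFinset fun j => Finset.range (if j ∈ u then b ^ k j else 1)

/-- `A(u,l) = {ℓ ∈ ℕ₀^s : b^{l_j-1} ≤ ℓ_j < b^{l_j} if j ∈ u, ℓ_j = 0 otherwise}`. -/
def Aset (b : ℕ) {s : ℕ} (u : Finset (Fin s)) (l : Fin s → ℕ) : Finset (Fin s → ℕ) :=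
  (Vset b u l).filter fun ℓ => ∀ j ∈ u, b ^ (l j - 1) ≤ ℓ j

/-- `k + 1_v`: add one to the components in `v`. -/
def plusOne {s : ℕ} (k : Fin s → ℕ) (v : Finset (Fin s)) : Fin s → ℕ :=
  fun j => if j ∈ v then k j + 1 else k j

/-- the gain coefficient `Γ_{u,k}` of an `N`-element point set in base `b`. -/
def gain {s : ℕ} (b N : ℕ) (x : Fin N → Fin s → ℝ) (u : Finset (Fin s))
    (k : Fin s → ℕ) : ℝ :=
  (1 / N) * ∑ i, ∑ i', ∏ j ∈ u,
    ((b * (if ⌊(b : ℝ) ^ (k j + 1) * x i j⌋ = ⌊(b : ℝ) ^ (k j + 1) * x i' j⌋ then (1:ℝ) else 0) -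
        (if ⌊(b : ℝ) ^ (k j) * x i j⌋ = ⌊(b : ℝ) ^ (k j) * x i' j⌋ then (1:ℝ) else 0)) /
      (b - 1))

/-- `C_{u,k}`: the matrix stacking the first `k_j` rows of `C_j` for `j ∈ u`
(a generating matrix `C_j` having `n` rows). -/
def Cuk {F : Type} [Field F] [Fintype F] {s m : ℕ} (C : Fin s → ℕ → Fin m → F) (n : ℕ)
    (u : Finset (Fin s)) (k : Fin s → ℕ) :
    Matrix ((j : Fin s) × Fin (min (if j ∈ u then k j else 0) n)) (Fin m) F :=
  fun p c => C p.1 (p.2 : ℕ) c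

/-- `C` generates a digital `(t,m,s)`-net in base `b = |F|`:
`C_{u,k}` has full row rank whenever `|k| ≤ m - t`. -/
def IsDigitalTNet {F : Type} [Field F] [Fintype F] {s m : ℕ}
    (C : Fin s → ℕ → Fin m → F) (n : ℕ) (t : ℕ) : Prop :=
  ∀ u : Finset (Fin s), ∀ k : Fin s → ℕ,
    (∑ j ∈ u, k j) + t ≤ m → (Cuk C n u k).rank = ∑ j ∈ u, k j

/-- the upper bound `B(u,k) = b^{m - rank(C_{u,k})} (b-1)^{rank(C_{u,k}) - rank(C_{u,k+1_u})}`. -/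
def Bcoef {F : Type} [Field F] [Fintype F] {s m : ℕ} (C : Fin s → ℕ → Fin m → F) (n : ℕ)
    (u : Finset (Fin s)) (k : Fin s → ℕ) : ℝ :=
  (Fintype.card F : ℝ) ^ ((m : ℤ) - ((Cuk C n u k).rank : ℤ)) *
    ((Fintype.card F : ℝ) - 1) ^
      (((Cuk C n u k).rank : ℤ) - ((Cuk C n u (plusOne k u)).rank : ℤ))

/-- `t*_u = m + 1 - min{|k| : k ∈ ℕ^{|u|}, C_{u,k} not full row rank}`. -/
def tstar {F : Type} [Field F] [Fintype F] {s m : ℕ} (C : Fin s → ℕ → Fin m → F) (n : ℕ)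
    (u : Finset (Fin s)) : ℤ :=
  (m : ℤ) + 1 -
    (sInf {r : ℕ | ∃ k : Fin s → ℕ, (∀ j ∈ u, 1 ≤ k j) ∧
      (Cuk C n u k).rank ≠ ∑ j ∈ u, k j ∧ r = ∑ j ∈ u, k j} : ℕ)

end

lemma bits_inj : ∀ (L : ℕ) (a b : ℕ → ℕ), (∀ i, a i ≤ 1) → (∀ i, b i ≤ 1) →
    (∑ i ∈ range L, a i * 2 ^ i) = (∑ i ∈ range L, b i * 2 ^ i) → ∀ i < L, a i = b i := by
  intro L
  induction L with
  | zero => intro a b _ _ _ i hi; omega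
  | succ L ih =>
    intro a b ha hb hsum i hi
    rw [Finset.sum_range_succ', Finset.sum_range_succ'] at hsum
    have e1 : (∑ i ∈ range L, a (i+1) * 2^(i+1)) = 2 * ∑ i ∈ range L, a (i+1) * 2^i := by
      rw [Finset.mul_sum]; exact Finset.sum_congr rfl fun j _ => by ring
    have e2 : (∑ i ∈ range L, b (i+1) * 2^(i+1)) = 2 * ∑ i ∈ range L, b (i+1) * 2^i := by
      rw [Finset.mul_sum]; exact Finset.sum_congr rfl fun j _ => by ring
    rw [e1, e2] at hsum
    simp only [pow_zero, mul_one] at hsum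
    have ha0 := ha 0
    have hb0 := hb 0
    have h0 : a 0 = b 0 ∧ (∑ i ∈ range L, a (i+1) * 2^i) = ∑ i ∈ range L, b (i+1) * 2^i := by
      omega
    rcases Nat.eq_zero_or_pos i with h | h
    · subst h; exact h0.1
    · obtain ⟨j, rfl⟩ : ∃ j, i = j + 1 := ⟨i - 1, by omega⟩
      exact ih (fun t => a (t+1)) (fun t => b (t+1)) (fun t => ha _) (fun t => hb _) h0.2 j (by omega)

lemma geo (M : ℕ) : ∑ t ∈ range M, ((1:ℝ)/2)^(t+1) = 1 - (1/2)^M := by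
  induction M with
  | zero => simp
  | succ M ih => rw [Finset.sum_range_succ, ih]; ring

lemma floor_bits (n K : ℕ) (a : ℕ → ℕ) (ha : ∀ i, a i ≤ 1) :
    ⌊(2:ℝ)^K * ∑ i ∈ range n, (a i : ℝ)/2^(i+1)⌋
      = ((∑ i ∈ range (min K n), a i * 2^(K-1-i) : ℕ) : ℤ) := by
  have hL : min K n ≤ n := min_le_right _ _
  have hsplit : (2:ℝ)^K * ∑ i ∈ range n, (a i : ℝ)/2^(i+1)
      = (∑ i ∈ range (min K n), (a i : ℝ) * 2^K / 2^(i+1))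
        + ∑ i ∈ Ico (min K n) n, (a i : ℝ) * 2^K / 2^(i+1) := by
    rw [Finset.mul_sum, ← Finset.sum_range_add_sum_Ico _ hL]
    congr 1 <;> exact Finset.sum_congr rfl fun j _ => by ring
  have hhead : (∑ i ∈ range (min K n), (a i : ℝ) * 2^K / 2^(i+1))
      = ((∑ i ∈ range (min K n), a i * 2^(K-1-i) : ℕ) : ℝ) := by
    push_cast
    refine Finset.sum_congr rfl fun j hj => ?_
    have hj' : j < min K n := Finset.mem_range.mp hj
    have hpow : (2:ℝ)^K = 2^(j+1) * 2^(K-1-j) := by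
      rw [← pow_add]; congr 1; omega
    rw [hpow]
    have : (2:ℝ)^(j+1) ≠ 0 := by positivity
    field_simp
  have htail0 : 0 ≤ ∑ i ∈ Ico (min K n) n, (a i : ℝ) * 2^K / 2^(i+1) := by
    apply Finset.sum_nonneg; intro j _; positivity
  have htail1 : (∑ i ∈ Ico (min K n) n, (a i : ℝ) * 2^K / 2^(i+1)) < 1 := by
    rcases le_or_gt K n with h | h
    · have hmk : min K n = K := min_eq_left h
      rw [hmk, Finset.sum_Ico_eq_sum_range]
      have hb : ∀ t ∈ range (n - K), (a (K+t) : ℝ) * 2^K / 2^(K+t+1) ≤ ((1:ℝ)/2)^(t+1) := by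
        intro t _
        have h1 : (a (K+t) : ℝ) ≤ 1 := by exact_mod_cast ha (K+t)
        have h2 : (2:ℝ)^(K+t+1) = 2^K * 2^(t+1) := by
          rw [add_assoc, pow_add]
        have h3 : ((1:ℝ)/2)^(t+1) = 2^K / 2^(K+t+1) := by
          rw [h2, div_pow, one_pow]
          field_simp
        rw [h3]
        calc (a (K+t) : ℝ) * 2^K / 2^(K+t+1) ≤ 1 * 2^K / 2^(K+t+1) := by
              gcongr
          _ = 2^K / 2^(K+t+1) := by rw [one_mul]
      calc (∑ t ∈ range (n-K), (a (K+t) : ℝ) * 2^K / 2^(K+t+1))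
          ≤ ∑ t ∈ range (n-K), ((1:ℝ)/2)^(t+1) := Finset.sum_le_sum hb
        _ = 1 - (1/2)^(n-K) := geo _
        _ < 1 := by
            have : (0:ℝ) < (1/2)^(n-K) := by positivity
            linarith
    · have : min K n = n := min_eq_right (le_of_lt h)
      rw [this]
      simp
  rw [hsplit, hhead]
  rw [Int.floor_eq_iff]
  constructor
  · push_cast; linarith
  · push_cast; linarith

lemma floor_bits_iff (n K : ℕ) (a b : ℕ → ℕ) (ha : ∀ i, a i ≤ 1) (hb : ∀ i, b i ≤ 1) :
    (⌊(2:ℝ)^K * ∑ i ∈ range n, (a i : ℝ)/2^(i+1)⌋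
      = ⌊(2:ℝ)^K * ∑ i ∈ range n, (b i : ℝ)/2^(i+1)⌋)
    ↔ ∀ i < min K n, a i = b i := by
  rw [floor_bits n K a ha, floor_bits n K b hb]
  set L := min K n with hLdef
  have hLK : L ≤ K := min_le_left _ _
  constructor
  · intro h
    have h' : (∑ i ∈ range L, a i * 2^(K-1-i)) = ∑ i ∈ range L, b i * 2^(K-1-i) := by
      exact_mod_cast h
    have ha' : (∑ i ∈ range L, a i * 2^(K-1-i)) = (∑ i ∈ range L, a i * 2^(L-1-i)) * 2^(K-L) := by
      rw [Finset.sum_mul]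
      refine Finset.sum_congr rfl fun j hj => ?_
      have : j < L := Finset.mem_range.mp hj
      rw [mul_assoc, ← pow_add]
      congr 2
      omega
    have hb' : (∑ i ∈ range L, b i * 2^(K-1-i)) = (∑ i ∈ range L, b i * 2^(L-1-i)) * 2^(K-L) := by
      rw [Finset.sum_mul]
      refine Finset.sum_congr rfl fun j hj => ?_
      have : j < L := Finset.mem_range.mp hj
      rw [mul_assoc, ← pow_add]
      congr 2
      omega
    rw [ha', hb'] at h'
    have h'' : (∑ i ∈ range L, a i * 2^(L-1-i)) = ∑ i ∈ range L, b i * 2^(L-1-i) :=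
      Nat.eq_of_mul_eq_mul_right (Nat.pow_pos (by norm_num)) h'
    have hra : (∑ i ∈ range L, a i * 2^(L-1-i)) = ∑ j ∈ range L, a (L-1-j) * 2^j := by
      rw [← Finset.sum_range_reflect (fun j => a (L-1-j) * 2^j) L]
      refine Finset.sum_congr rfl fun j hj => ?_
      have : j < L := Finset.mem_range.mp hj
      congr 2
      omega
    have hrb : (∑ i ∈ range L, b i * 2^(L-1-i)) = ∑ j ∈ range L, b (L-1-j) * 2^j := by
      rw [← Finset.sum_range_reflect (fun j => b (L-1-j) * 2^j) L]
      refine Finset.sum_congr rfl fun j hj => ?_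
      have : j < L := Finset.mem_range.mp hj
      congr 2
      omega
    rw [hra, hrb] at h''
    have := bits_inj L (fun j => a (L-1-j)) (fun j => b (L-1-j))
      (fun j => ha _) (fun j => hb _) h''
    intro i hi
    have h5 := this (L-1-i) (by omega)
    have hii : L-1-(L-1-i) = i := by omega
    simpa only [hii] using h5
  · intro h
    congr 1
    exact_mod_cast Finset.sum_congr rfl fun j hj => by
      rw [h j (Finset.mem_range.mp hj)]
section F2facts
variable {F : Type} [Field F] [Fintype F]

lemma Fcases (h2 : Fintype.card F = 2) (a : F) : a = 0 ∨ a = 1 := by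
  classical
  have h01 : (0:F) ≠ 1 := zero_ne_one
  have huniv : ({0,1} : Finset F) = Finset.univ := by
    apply Finset.eq_univ_of_card
    rw [Finset.card_insert_of_notMem (by simp [h01]), Finset.card_singleton, h2]
  have ha : a ∈ ({0,1} : Finset F) := huniv ▸ Finset.mem_univ a
  simpa using ha

lemma Fadd_self (h2 : Fintype.card F = 2) (a : F) : a + a = 0 := by
  rcases Fcases h2 a with h | h
  · simp [h]
  · subst h
    rcases Fcases h2 (1+1 : F) with h | h
    · exact h
    · exfalso
      have : (1:F) = 0 := by linear_combination h
      exact one_ne_zero this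

lemma Fsub_eq_add (h2 : Fintype.card F = 2) (a b : F) : a - b = a + b := by
  have h := Fadd_self h2 b
  have : -b = b := by linear_combination -h
  rw [sub_eq_add_neg, this]

lemma fromF_le (h2 : Fintype.card F = 2) (φ : Fin (Fintype.card F) ≃ F) (a : F) :
    fromF φ a ≤ 1 := by
  have : fromF φ a < Fintype.card F := (φ.symm a).isLt
  omega

lemma fromF_inj (φ : Fin (Fintype.card F) ≃ F) {a b : F} (h : fromF φ a = fromF φ b) :
    a = b := by
  have : φ.symm a = φ.symm b := Fin.ext h
  exact φ.symm.injective this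

lemma ndigit_two_le (h i : ℕ) : ndigit 2 h i ≤ 1 := by
  have : h / 2 ^ i % 2 < 2 := Nat.mod_lt _ (by norm_num)
  unfold ndigit
  omega

lemma toF_inj_on_digits (h2 : Fintype.card F = 2) (φ : Fin (Fintype.card F) ≃ F)
    {a b : ℕ} (ha : a ≤ 1) (hb : b ≤ 1) (h : toF φ a = toF φ b) : a = b := by
  unfold toF at h
  have h1 : a % Fintype.card F = b % Fintype.card F := Fin.val_eq_of_eq (φ.injective h)
  rw [h2] at h1
  omega

lemma nat_eq_sum_digits : ∀ (M h : ℕ), h < 2^M → h = ∑ c ∈ Finset.range M, (h / 2^c % 2) * 2^c := by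
  intro M
  induction M with
  | zero => intro h hh; interval_cases h; simp
  | succ M ih =>
    intro h hh
    rw [Finset.sum_range_succ']
    have e1 : ∀ c, h / 2^(c+1) % 2 * 2^(c+1) = 2 * ((h/2) / 2^c % 2 * 2^c) := by
      intro c
      have : h / 2^(c+1) = (h/2) / 2^c := by
        rw [Nat.div_div_eq_div_mul, pow_succ']
      rw [this]; ring
    rw [Finset.sum_congr rfl fun c _ => e1 c, ← Finset.mul_sum]
    have hd : h / 2 < 2^M := by
      have : 2^(M+1) = 2^M * 2 := by ring
      omega
    have := ih (h/2) hd
    simp only [pow_zero, mul_one]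
    omega

lemma digits_inj (M : ℕ) {h h' : ℕ} (hh : h < 2^M) (hh' : h' < 2^M)
    (he : ∀ c < M, ndigit 2 h c = ndigit 2 h' c) : h = h' := by
  rw [nat_eq_sum_digits M h hh, nat_eq_sum_digits M h' hh']
  exact Finset.sum_congr rfl fun c hc => by
    have := he c (Finset.mem_range.mp hc)
    unfold ndigit at this
    rw [this]

end F2facts
open Matrix in
theorem _dummy_tok : True := trivial

open Matrix

section NetFacts
variable {F : Type} [Field F] [Fintype F] {s m : ℕ}

/-- digit vector of a natural number, as an element of `F^m`. -/
def dgF (φ : Fin (Fintype.card F) ≃ F) (m : ℕ) (h : ℕ) : Fin m → F :=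
  fun c => toF φ (ndigit (Fintype.card F) h (c : ℕ))

lemma dnet_eq (h2 : Fintype.card F = 2) (φ : Fin (Fintype.card F) ≃ F)
    (C : Fin s → ℕ → Fin m → F) (n : ℕ) (h : ℕ) (j : Fin s) :
    dnet φ C n h j
      = ∑ i ∈ Finset.range n, ((fromF φ ((C j i) ⬝ᵥ (dgF φ m h)) : ℕ) : ℝ)/2^(i+1) := by
  unfold dnet dgF dotProduct
  rw [h2]
  push_cast
  rfl

lemma dnet_floor_iff (h2 : Fintype.card F = 2) (φ : Fin (Fintype.card F) ≃ F)
    (C : Fin s → ℕ → Fin m → F) (n : ℕ) (h h' : ℕ) (j : Fin s) (K : ℕ) :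
    (⌊(2:ℝ)^K * dnet φ C n h j⌋ = ⌊(2:ℝ)^K * dnet φ C n h' j⌋)
      ↔ ∀ i < min K n, (C j i) ⬝ᵥ (dgF φ m h - dgF φ m h') = 0 := by
  rw [dnet_eq h2 φ C n h j, dnet_eq h2 φ C n h' j,
    floor_bits_iff n K _ _ (fun i => fromF_le h2 φ _) (fun i => fromF_le h2 φ _)]
  constructor
  · intro hq i hi
    have := fromF_inj φ (hq i hi)
    rw [dotProduct_sub, this, sub_self]
  · intro hq i hi
    have := hq i hi
    rw [dotProduct_sub, sub_eq_zero] at this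
    rw [this]

lemma dgF_bijective (h2 : Fintype.card F = 2) (φ : Fin (Fintype.card F) ≃ F) (m : ℕ) :
    Function.Bijective (fun h : Fin (Fintype.card F ^ m) => dgF φ m (h : ℕ)) := by
  rw [Fintype.bijective_iff_injective_and_card]
  constructor
  · intro h h' he
    have hlt : (h : ℕ) < 2^m := by rw [← h2]; exact h.isLt
    have hlt' : (h' : ℕ) < 2^m := by rw [← h2]; exact h'.isLt
    apply Fin.ext
    apply digits_inj m hlt hlt'
    intro c hc
    have := congrFun he ⟨c, hc⟩
    unfold dgF at this
    simp only [h2] at this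
    exact toF_inj_on_digits h2 φ (ndigit_two_le _ _) (ndigit_two_le _ _) this
  · rw [Fintype.card_fin, Fintype.card_fun, Fintype.card_fin]

end NetFacts
set_option linter.unusedSectionVars false
section RankFacts
open Module Submodule
variable {F : Type} [Field F] [Fintype F] {s m : ℕ}

/-- the family of the first `κ j` rows of each generating matrix. -/
def rowsOf (C : Fin s → ℕ → Fin m → F) (κ : Fin s → ℕ) :
    (Σ j : Fin s, Fin (κ j)) → (Fin m → F) :=
  fun p => C p.1 (p.2 : ℕ)

/-- the dimension of the span of the first `κ j` rows of the matrices `C j`. -/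
noncomputable def rk (C : Fin s → ℕ → Fin m → F) (κ : Fin s → ℕ) : ℕ :=
  Module.finrank F (span F (Set.range (rowsOf C κ)))

/-- truncated row-count function corresponding to `Cuk`. -/
def truncK {s : ℕ} (u : Finset (Fin s)) (k : Fin s → ℕ) (n : ℕ) : Fin s → ℕ :=
  fun j => if j ∈ u then min (k j) n else 0

lemma range_Cuk_eq (C : Fin s → ℕ → Fin m → F) (n : ℕ) (u : Finset (Fin s)) (k : Fin s → ℕ) :
    Set.range (Cuk C n u k) = Set.range (rowsOf C (truncK u k n)) := by
  have hb : ∀ j : Fin s, min (if j ∈ u then k j else 0) n = truncK u k n j := by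
    intro j; unfold truncK; split <;> simp [Nat.min_def]
  ext w
  constructor
  · rintro ⟨⟨j, i⟩, rfl⟩
    exact ⟨⟨j, ⟨(i : ℕ), by rw [← hb j]; exact i.isLt⟩⟩, rfl⟩
  · rintro ⟨⟨j, i⟩, rfl⟩
    exact ⟨⟨j, ⟨(i : ℕ), by rw [hb j]; exact i.isLt⟩⟩, rfl⟩

lemma rank_Cuk_eq_rk (C : Fin s → ℕ → Fin m → F) (n : ℕ) (u : Finset (Fin s)) (k : Fin s → ℕ) :
    (Cuk C n u k).rank = rk C (truncK u k n) := by
  rw [Matrix.rank_eq_finrank_span_row, Matrix.row, range_Cuk_eq]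
  rfl

lemma rk_mono (C : Fin s → ℕ → Fin m → F) {κ κ' : Fin s → ℕ} (h : ∀ j, κ j ≤ κ' j) :
    rk C κ ≤ rk C κ' := by
  apply Submodule.finrank_mono
  apply Submodule.span_mono
  rintro w ⟨⟨j, i⟩, rfl⟩
  exact ⟨⟨j, ⟨(i : ℕ), lt_of_lt_of_le i.isLt (h j)⟩⟩, rfl⟩

lemma rk_le_sum (C : Fin s → ℕ → Fin m → F) (κ : Fin s → ℕ) : rk C κ ≤ ∑ j, κ j := by
  classical
  unfold rk
  calc Module.finrank F (span F (Set.range (rowsOf C κ)))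
      ≤ (Set.range (rowsOf C κ)).toFinset.card := finrank_span_le_card _
    _ = (Finset.image (rowsOf C κ) Finset.univ).card := by rw [Set.toFinset_range]
    _ ≤ Finset.univ.card := Finset.card_image_le
    _ = ∑ j, κ j := by
        rw [Finset.card_univ, Fintype.card_sigma]
        simp

lemma rk_le_m (C : Fin s → ℕ → Fin m → F) (κ : Fin s → ℕ) : rk C κ ≤ m := by
  have := Submodule.finrank_le (span F (Set.range (rowsOf C κ)))
  rwa [Module.finrank_pi, Fintype.card_fin] at this

open Matrix in
lemma dot_eq_zero_of_mem_span {S : Set (Fin m → F)} {w : Fin m → F} (hw : w ∈ span F S)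
    {z : Fin m → F} (hz : ∀ v ∈ S, v ⬝ᵥ z = 0) : w ⬝ᵥ z = 0 := by
  induction hw using Submodule.span_induction with
  | mem v hv => exact hz v hv
  | zero => simp
  | add a b _ _ ha hb => rw [add_dotProduct, ha, hb, add_zero]
  | smul c a _ ha => rw [smul_dotProduct, ha, smul_zero]

open Matrix in
/-- counting solutions of `M z = 0`. -/
lemma card_ker_eq {ι : Type} [Fintype ι] (M : Matrix ι (Fin m) F) :
    M.rank ≤ m ∧
    Nat.card {z : Fin m → F // ∀ i, M i ⬝ᵥ z = 0} = Fintype.card F ^ (m - M.rank) := by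
  classical
  have hker : ∀ z, (∀ i, M i ⬝ᵥ z = 0) ↔ z ∈ LinearMap.ker M.mulVecLin := by
    intro z
    rw [LinearMap.mem_ker, Matrix.mulVecLin_apply]
    constructor
    · intro h; funext i; exact h i
    · intro h i; exact congrFun h i
  have hrn := LinearMap.finrank_range_add_finrank_ker M.mulVecLin
  rw [Module.finrank_pi, Fintype.card_fin] at hrn
  have hrank : M.rank = Module.finrank F (LinearMap.range M.mulVecLin) := rfl
  constructor
  · omega
  · have he : {z : Fin m → F // ∀ i, M i ⬝ᵥ z = 0} ≃ LinearMap.ker M.mulVecLin :=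
      Equiv.subtypeEquivRight hker
    rw [Nat.card_congr he]
    have : Fintype.card (LinearMap.ker M.mulVecLin)
        = Fintype.card F ^ Module.finrank F (LinearMap.ker M.mulVecLin) :=
      card_eq_pow_finrank
    rw [Nat.card_eq_fintype_card, this]
    congr 1
    omega

open Matrix in
/-- duality: a vector orthogonal to the kernel lies in the row span. -/
lemma mem_span_of_forall_ker {ι : Type} [Fintype ι] (v : ι → (Fin m → F)) (E : Fin m → F)
    (hQ : ∀ z, (∀ i, v i ⬝ᵥ z = 0) → E ⬝ᵥ z = 0) : E ∈ span F (Set.range v) := by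
  classical
  set M : Matrix ι (Fin m) F := Matrix.of v with hM
  set M' : Matrix (Option ι) (Fin m) F := Matrix.of (fun o => Option.elim o E v) with hM'
  have hkereq : LinearMap.ker M'.mulVecLin = LinearMap.ker M.mulVecLin := by
    ext z
    simp only [LinearMap.mem_ker, Matrix.mulVecLin_apply]
    constructor
    · intro h
      funext i
      exact congrFun h (some i)
    · intro h
      funext o
      match o with
      | none =>
        have : ∀ i, v i ⬝ᵥ z = 0 := fun i => congrFun h i
        exact hQ z this
      | some i => exact congrFun h i
  have h1 := LinearMap.finrank_range_add_finrank_ker M.mulVecLin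
  have h2 := LinearMap.finrank_range_add_finrank_ker M'.mulVecLin
  rw [hkereq] at h2
  have hrk : M'.rank = M.rank := by
    have : M.rank = Module.finrank F (LinearMap.range M.mulVecLin) := rfl
    have : M'.rank = Module.finrank F (LinearMap.range M'.mulVecLin) := rfl
    omega
  have hspan : span F (Set.range M) ≤ span F (Set.range M') := by
    apply Submodule.span_mono
    rintro w ⟨i, rfl⟩
    exact ⟨some i, rfl⟩
  have hfr : Module.finrank F (span F (Set.range M'))
      ≤ Module.finrank F (span F (Set.range M)) := by
    rw [show Set.range M' = Set.range M'.row from rfl, show Set.range M = Set.range M.row from rfl,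
      ← Matrix.rank_eq_finrank_span_row, ← Matrix.rank_eq_finrank_span_row, hrk]
  have heq := Submodule.eq_of_le_of_finrank_le hspan hfr
  have hE : E ∈ span F (Set.range M') := subset_span ⟨none, rfl⟩
  rw [← heq] at hE
  have : Set.range M = Set.range v := rfl
  rwa [this] at hE

end RankFacts
section GainFormula
open Matrix
variable {F : Type} [Field F] [Fintype F] {s m : ℕ}

open Classical in
noncomputable def sgn {F : Type} [Field F] (a : F) : ℝ :=
  if a = 0 then 1 else -1

lemma sum_dotProduct' {ι : Type} (t : Finset ι) (f : ι → (Fin m → F)) (z : Fin m → F) :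
    (∑ j ∈ t, f j) ⬝ᵥ z = ∑ j ∈ t, f j ⬝ᵥ z := by
  classical
  induction t using Finset.induction_on with
  | empty => simp
  | insert _ _ ha ih =>
    rw [Finset.sum_insert ha, Finset.sum_insert ha, add_dotProduct, ih]

lemma sgn_zero : sgn (0 : F) = 1 := by unfold sgn; simp

lemma sgn_one : sgn (1 : F) = -1 := by unfold sgn; simp

lemma sgn_add (h2 : Fintype.card F = 2) (a b : F) : sgn (a + b) = sgn a * sgn b := by
  rcases Fcases h2 a with ha | ha <;> rcases Fcases h2 b with hb | hb <;> subst ha <;> subst hb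
  · simp [sgn_zero]
  · simp [sgn_zero]
  · simp [sgn_zero]
  · rw [Fadd_self h2 1, sgn_zero, sgn_one]
    norm_num

lemma prod_sgn {ι : Type} (h2 : Fintype.card F = 2) (t : Finset ι) (f : ι → F) :
    ∏ j ∈ t, sgn (f j) = sgn (∑ j ∈ t, f j) := by
  classical
  induction t using Finset.induction_on with
  | empty => simp [sgn_zero]
  | insert _ _ ha ih =>
    rw [Finset.prod_insert ha, Finset.sum_insert ha, ih, sgn_add h2]

/-- the extension row `e_j` (the `k_j`-th row, or `0` if it is beyond row `n`). -/
def erow (C : Fin s → ℕ → Fin m → F) (n : ℕ) (k : Fin s → ℕ) (j : Fin s) : Fin m → F :=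
  if k j < n then C j (k j) else 0

open Classical in
lemma gain_formula (h2 : Fintype.card F = 2) (φ : Fin (Fintype.card F) ≃ F)
    (C : Fin s → ℕ → Fin m → F) (n : ℕ) (u : Finset (Fin s)) (k : Fin s → ℕ) :
    gain (Fintype.card F) (Fintype.card F ^ m) (fun i j => dnet φ C n (i : ℕ) j) u k
      = if (∀ z : Fin m → F, (∀ j ∈ u, ∀ i, i < min (k j) n → C j i ⬝ᵥ z = 0) →
            (∑ j ∈ u, erow C n k j) ⬝ᵥ z = 0)
          then (2:ℝ) ^ (m - (Cuk C n u k).rank) else 0 := by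
  classical
  set E : Fin m → F := ∑ j ∈ u, erow C n k j with hE
  set Pall : (Fin m → F) → Prop :=
    fun z => ∀ j ∈ u, ∀ i, i < min (k j) n → C j i ⬝ᵥ z = 0 with hPalldef
  set G : (Fin m → F) → ℝ := fun z => if Pall z then sgn (E ⬝ᵥ z) else 0 with hGdef
  have hcast : ((Fintype.card F : ℕ) : ℝ) = 2 := by rw [h2]; norm_num
  -- Step 1: each pair term equals `G (dgF h - dgF h')`
  have key : ∀ h h' : Fin (Fintype.card F ^ m),
      (∏ j ∈ u, (((Fintype.card F : ℕ) : ℝ) *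
          (if ⌊((Fintype.card F : ℕ) : ℝ) ^ (k j + 1) * dnet φ C n (h : ℕ) j⌋ =
              ⌊((Fintype.card F : ℕ) : ℝ) ^ (k j + 1) * dnet φ C n (h' : ℕ) j⌋ then (1:ℝ) else 0) -
          (if ⌊((Fintype.card F : ℕ) : ℝ) ^ (k j) * dnet φ C n (h : ℕ) j⌋ =
              ⌊((Fintype.card F : ℕ) : ℝ) ^ (k j) * dnet φ C n (h' : ℕ) j⌋ then (1:ℝ) else 0)) /
          (((Fintype.card F : ℕ) : ℝ) - 1))
        = G (dgF φ m (h : ℕ) - dgF φ m (h' : ℕ)) := by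
    intro h h'
    set z : Fin m → F := dgF φ m (h : ℕ) - dgF φ m (h' : ℕ) with hz
    have hone : ((Fintype.card F : ℕ) : ℝ) - 1 = 1 := by rw [hcast]; norm_num
    have hfac : ∀ j ∈ u,
        (((Fintype.card F : ℕ) : ℝ) *
          (if ⌊((Fintype.card F : ℕ) : ℝ) ^ (k j + 1) * dnet φ C n (h : ℕ) j⌋ =
              ⌊((Fintype.card F : ℕ) : ℝ) ^ (k j + 1) * dnet φ C n (h' : ℕ) j⌋ then (1:ℝ) else 0) -
          (if ⌊((Fintype.card F : ℕ) : ℝ) ^ (k j) * dnet φ C n (h : ℕ) j⌋ =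
              ⌊((Fintype.card F : ℕ) : ℝ) ^ (k j) * dnet φ C n (h' : ℕ) j⌋ then (1:ℝ) else 0)) /
          (((Fintype.card F : ℕ) : ℝ) - 1)
        = (2 * (if (∀ i, i < min (k j + 1) n → C j i ⬝ᵥ z = 0) then (1:ℝ) else 0)
            - (if (∀ i, i < min (k j) n → C j i ⬝ᵥ z = 0) then (1:ℝ) else 0)) := by
      intro j hj
      rw [hone, div_one, hcast]
      congr 1
      · congr 1
        exact if_congr (dnet_floor_iff h2 φ C n (h : ℕ) (h' : ℕ) j (k j + 1)) rfl rfl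
      · exact if_congr (dnet_floor_iff h2 φ C n (h : ℕ) (h' : ℕ) j (k j)) rfl rfl
    rw [Finset.prod_congr rfl hfac]
    by_cases hP : Pall z
    · have hGz : G z = sgn (E ⬝ᵥ z) := if_pos hP
      rw [hGz, hE, sum_dotProduct', ← prod_sgn h2]
      apply Finset.prod_congr rfl
      intro j hj
      have hPj : ∀ i, i < min (k j) n → C j i ⬝ᵥ z = 0 := hP j hj
      rw [if_pos hPj]
      by_cases he : erow C n k j ⬝ᵥ z = 0
      · have hfull : ∀ i, i < min (k j + 1) n → C j i ⬝ᵥ z = 0 := by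
          intro i hi
          by_cases hik : i < min (k j) n
          · exact hPj i hik
          · have h1 : i = k j ∧ k j < n := by omega
            have : erow C n k j = C j (k j) := by unfold erow; rw [if_pos h1.2]
            rw [h1.1, ← this]
            exact he
        rw [if_pos hfull]
        unfold sgn
        rw [if_pos he]
        norm_num
      · have hnf : ¬(∀ i, i < min (k j + 1) n → C j i ⬝ᵥ z = 0) := by
          intro hcon
          apply he
          by_cases hkn : k j < n
          · have : k j < min (k j + 1) n := by omega
            have h3 := hcon (k j) this
            unfold erow
            rw [if_pos hkn]
            exact h3
          · unfold erow
            rw [if_neg hkn]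
            exact zero_dotProduct z
        rw [if_neg hnf]
        unfold sgn
        rw [if_neg he]
        norm_num
    · have hGz : G z = 0 := if_neg hP
      rw [hGz]
      have hP2 : ¬ (∀ j ∈ u, ∀ i, i < min (k j) n → C j i ⬝ᵥ z = 0) := hP
      push_neg at hP2
      obtain ⟨j0, hj0u, i0, hi0, hi0ne⟩ := hP2
      apply Finset.prod_eq_zero hj0u
      have hn1 : ¬(∀ i, i < min (k j0) n → C j0 i ⬝ᵥ z = 0) := by
        push_neg
        exact ⟨i0, hi0, hi0ne⟩
      have hn2 : ¬(∀ i, i < min (k j0 + 1) n → C j0 i ⬝ᵥ z = 0) := by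
        push_neg
        exact ⟨i0, by omega, hi0ne⟩
      rw [if_neg hn1, if_neg hn2]
      ring
  -- Step 2: sum over pairs
  have hsum : (∑ h : Fin (Fintype.card F ^ m), ∑ h' : Fin (Fintype.card F ^ m),
        G (dgF φ m (h : ℕ) - dgF φ m (h' : ℕ)))
      = ((Fintype.card F ^ m : ℕ) : ℝ) * ∑ z : Fin m → F, G z := by
    rw [Function.Bijective.sum_comp (dgF_bijective h2 φ m)
      (fun y => ∑ h' : Fin (Fintype.card F ^ m), G (y - dgF φ m (h' : ℕ)))]
    have hinner : ∀ y : Fin m → F,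
        (∑ h' : Fin (Fintype.card F ^ m), G (y - dgF φ m (h' : ℕ))) = ∑ z : Fin m → F, G z := by
      intro y
      rw [Function.Bijective.sum_comp (dgF_bijective h2 φ m) (fun y' => G (y - y'))]
      exact Equiv.sum_comp (Equiv.subLeft y) G
    rw [Finset.sum_congr rfl fun y _ => hinner y]
    rw [Finset.sum_const, Finset.card_univ, nsmul_eq_mul]
    congr 1
    rw [Fintype.card_fun, Fintype.card_fin]
  have hgain : gain (Fintype.card F) (Fintype.card F ^ m)
      (fun i j => dnet φ C n (i : ℕ) j) u k = ∑ z : Fin m → F, G z := by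
    unfold gain
    beta_reduce
    rw [Finset.sum_congr rfl fun h _ => Finset.sum_congr rfl fun h' _ => key h h', hsum]
    have hN : ((Fintype.card F ^ m : ℕ) : ℝ) ≠ 0 := by
      have : (0:ℕ) < Fintype.card F ^ m := pow_pos Fintype.card_pos m
      positivity
    field_simp
  rw [hgain]
  -- Step 3: evaluate the character sum
  by_cases hQ : ∀ z : Fin m → F,
      (∀ j ∈ u, ∀ i, i < min (k j) n → C j i ⬝ᵥ z = 0) → (∑ j ∈ u, erow C n k j) ⬝ᵥ z = 0
  · rw [if_pos hQ]
    have hG1 : ∀ z, G z = if Pall z then (1:ℝ) else 0 := by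
      intro z
      by_cases hP : Pall z
      · have hg : G z = sgn (E ⬝ᵥ z) := if_pos hP
        have h0 : E ⬝ᵥ z = 0 := hQ z hP
        rw [hg, h0, sgn_zero, if_pos hP]
      · have hg : G z = 0 := if_neg hP
        rw [hg, if_neg hP]
    rw [Finset.sum_congr rfl fun z _ => hG1 z, Finset.sum_boole]
    have hiff : ∀ z : Fin m → F, Pall z ↔ (∀ p, (Cuk C n u k) p ⬝ᵥ z = 0) := by
      intro z
      constructor
      · rintro hP ⟨j, i⟩
        by_cases hj : j ∈ u
        · have hlt : (i : ℕ) < (if j ∈ u then k j else 0) ⊓ n := i.isLt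
          have h1 : (if j ∈ u then k j else 0) = k j := if_pos hj
          have hilt : (i : ℕ) < min (k j) n := by omega
          exact hP j hj i.val hilt
        · exfalso
          have hlt : (i : ℕ) < (if j ∈ u then k j else 0) ⊓ n := i.isLt
          have h1 : (if j ∈ u then k j else 0) = 0 := if_neg hj
          omega
      · intro hP j hj i hi
        exact hP ⟨j, ⟨i, by
          have h1 : (if j ∈ u then k j else 0) = k j := if_pos hj
          omega⟩⟩
    have hcardeq : (Finset.univ.filter Pall).card
        = Nat.card {z : Fin m → F // ∀ p, (Cuk C n u k) p ⬝ᵥ z = 0} := by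
      rw [Nat.card_eq_fintype_card, Fintype.card_subtype]
      congr 1
      apply Finset.filter_congr
      intro z _
      simpa using hiff z
    rw [hcardeq, (card_ker_eq (Cuk C n u k)).2, h2]
    push_cast
    rfl
  · rw [if_neg hQ]
    push_neg at hQ
    obtain ⟨z0, hz0P, hz0E⟩ := hQ
    have hz0P' : Pall z0 := hz0P
    have hz0E' : E ⬝ᵥ z0 ≠ 0 := hz0E
    clear hz0P hz0E
    have hz0E1 : E ⬝ᵥ z0 = 1 := (Fcases h2 _).resolve_left hz0E'
    have hrei : (∑ z : Fin m → F, G z) = ∑ z : Fin m → F, G (z + z0) :=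
      (Equiv.sum_comp (Equiv.addRight z0) G).symm
    have hneg : ∀ z, G (z + z0) = - G z := by
      intro z
      by_cases hP : Pall z
      · have hP' : Pall (z + z0) := by
          intro j hj i hi
          rw [dotProduct_add, hP j hj i hi, hz0P' j hj i hi, add_zero]
        have e1 : G (z + z0) = sgn (E ⬝ᵥ (z + z0)) := if_pos hP'
        have e2 : G z = sgn (E ⬝ᵥ z) := if_pos hP
        rw [e1, e2, dotProduct_add, hz0E1, sgn_add h2, sgn_one]
        ring
      · have hP' : ¬ Pall (z + z0) := by
          intro hcon
          apply hP
          intro j hj i hi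
          have h1 := hcon j hj i hi
          rw [dotProduct_add, hz0P' j hj i hi, add_zero] at h1
          exact h1
        have e1 : G (z + z0) = 0 := if_neg hP'
        have e2 : G z = 0 := if_neg hP
        rw [e1, e2]
        ring
    have hSS : (∑ z : Fin m → F, G z) = - ∑ z : Fin m → F, G z := by
      nth_rewrite 1 [hrei]
      rw [Finset.sum_congr rfl fun z _ => hneg z, Finset.sum_neg_distrib]
    linarith
end GainFormula
section SigmaMachinery
open Matrix Module Submodule
variable {F : Type} [Field F] [Fintype F] {s m : ℕ}

/-- the set whose infimum defines `t*` (for `u = univ`). -/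
def sigmaSet (C : Fin s → ℕ → Fin m → F) (n : ℕ) : Set ℕ :=
  {r : ℕ | ∃ k : Fin s → ℕ, (∀ j ∈ Finset.univ, 1 ≤ k j) ∧
      (Cuk C n Finset.univ k).rank ≠ ∑ j ∈ Finset.univ, k j ∧ r = ∑ j ∈ Finset.univ, k j}

lemma tstar_univ_eq (C : Fin s → ℕ → Fin m → F) (n : ℕ) :
    tstar C n Finset.univ = (m : ℤ) + 1 - (sInf (sigmaSet C n) : ℕ) := rfl

lemma finrank_sup_le' (A B : Submodule F (Fin m → F)) :
    Module.finrank F ↥(A ⊔ B) ≤ Module.finrank F ↥A + Module.finrank F ↥B := by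
  have := Submodule.finrank_sup_add_finrank_inf_eq A B
  omega

lemma finrank_span_finset_le' (t : Finset (Fin m → F)) :
    Module.finrank F (span F (↑t : Set (Fin m → F))) ≤ t.card := by
  classical
  have h := finrank_span_le_card (R := F) (↑t : Set (Fin m → F))
  simpa using h

lemma exists_le_sum {s : ℕ} (g : Fin s → ℕ) :
    ∀ r : ℕ, r ≤ ∑ j, g j → ∃ κ : Fin s → ℕ, (∀ j, κ j ≤ g j) ∧ ∑ j, κ j = r := by
  intro r
  induction r with
  | zero => intro _; exact ⟨fun _ => 0, fun j => Nat.zero_le _, by simp⟩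
  | succ r ih =>
    intro hr
    obtain ⟨κ, hκ, hS⟩ := ih (by omega)
    have hex : ∃ j, κ j < g j := by
      by_contra hcon
      push_neg at hcon
      have : ∑ j, g j ≤ ∑ j, κ j := Finset.sum_le_sum fun j _ => hcon j
      omega
    obtain ⟨j0, hj0⟩ := hex
    refine ⟨Function.update κ j0 (κ j0 + 1), ?_, ?_⟩
    · intro j
      by_cases h : j = j0
      · subst h; rw [Function.update_self]; omega
      · rw [Function.update_of_ne h]; exact hκ j
    · rw [Finset.sum_update_of_mem (Finset.mem_univ j0), Finset.sdiff_singleton_eq_erase]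
      have h2 := Finset.add_sum_erase Finset.univ κ (Finset.mem_univ j0)
      omega

lemma rank_Cuk_univ (C : Fin s → ℕ → Fin m → F) (n : ℕ) {κ : Fin s → ℕ}
    (hκn : ∀ j, κ j ≤ n) : (Cuk C n Finset.univ κ).rank = rk C κ := by
  rw [rank_Cuk_eq_rk]
  congr 1
  funext j
  unfold truncK
  rw [if_pos (Finset.mem_univ j), min_eq_left (hκn j)]

lemma sInf_le_of_dep (C : Fin s → ℕ → Fin m → F) (n : ℕ) (hn1 : 1 ≤ n)
    {κ : Fin s → ℕ} (hκn : ∀ j, κ j ≤ n) (hdep : rk C κ < ∑ j, κ j) :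
    sInf (sigmaSet C n)
      ≤ (∑ j, κ j) + (s - (Finset.univ.filter fun j => 1 ≤ κ j).card) := by
  classical
  set κ' : Fin s → ℕ := fun j => max (κ j) 1 with hκ'def
  have hκ'eq : ∀ j, κ' j = max (κ j) 1 := fun _ => rfl
  have hκ'n : ∀ j, κ' j ≤ n := fun j => by
    rw [hκ'eq j]; exact max_le (hκn j) hn1
  have hsum : ∑ j, κ' j = (∑ j, κ j) + ∑ j, (if 1 ≤ κ j then 0 else 1) := by
    rw [← Finset.sum_add_distrib]
    refine Finset.sum_congr rfl fun j _ => ?_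
    rw [hκ'eq j]
    by_cases hj : 1 ≤ κ j <;> simp [hj] <;> omega
  have hcard : (Finset.univ.filter fun j => 1 ≤ κ j).card
      = ∑ j, (if 1 ≤ κ j then 1 else 0) := Finset.card_filter _ _
  have hcards : (∑ j, (if 1 ≤ κ j then 1 else 0)) + (∑ j, (if 1 ≤ κ j then 0 else 1)) = s := by
    rw [← Finset.sum_add_distrib]
    have : ∀ j : Fin s, ((if 1 ≤ κ j then 1 else 0) + (if 1 ≤ κ j then 0 else 1)) = 1 := by
      intro j; by_cases hj : 1 ≤ κ j <;> simp [hj]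
    rw [Finset.sum_congr rfl fun j _ => this j]
    simp
  -- rank of the padded prefix
  have hrk : rk C κ' ≤ rk C κ + ∑ j, (if 1 ≤ κ j then 0 else 1) := by
    set extra : Finset (Fin m → F) :=
      (Finset.univ.filter fun j => κ j = 0).image (fun j => C j 0) with hextra
    have hsub : span F (Set.range (rowsOf C κ'))
        ≤ span F (Set.range (rowsOf C κ)) ⊔ span F (↑extra : Set (Fin m → F)) := by
      rw [span_le]
      rintro w ⟨⟨j, i⟩, rfl⟩
      by_cases hj : 1 ≤ κ j
      · have hi : (i : ℕ) < κ j := by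
          have h5 : (i : ℕ) < κ' j := i.isLt
          have h6 : κ' j = max (κ j) 1 := rfl
          omega
        exact le_sup_left (α := Submodule F (Fin m → F))
          (Submodule.subset_span ⟨⟨j, ⟨(i : ℕ), hi⟩⟩, rfl⟩)
      · have hi0 : (i : ℕ) = 0 := by
          have h5 : (i : ℕ) < κ' j := i.isLt
          have h6 : κ' j = max (κ j) 1 := rfl
          omega
        have hw : rowsOf C κ' ⟨j, i⟩ = C j 0 := by
          unfold rowsOf; rw [hi0]
        rw [hw]
        refine le_sup_right (α := Submodule F (Fin m → F)) (Submodule.subset_span ?_)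
        rw [hextra]
        simp only [Finset.coe_image, Set.mem_image, Finset.mem_coe, Finset.mem_filter]
        exact ⟨j, ⟨Finset.mem_univ j, by omega⟩, rfl⟩
    have h1 : rk C κ' ≤ Module.finrank F
        ↥(span F (Set.range (rowsOf C κ)) ⊔ span F (↑extra : Set (Fin m → F))) :=
      Submodule.finrank_mono hsub
    have h2 := finrank_sup_le' (span F (Set.range (rowsOf C κ)))
      (span F (↑extra : Set (Fin m → F)))
    have h3 := finrank_span_finset_le' extra
    have h4 : extra.card ≤ ∑ j, (if 1 ≤ κ j then 0 else 1) := by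
      calc extra.card ≤ (Finset.univ.filter fun j => κ j = 0).card := Finset.card_image_le
        _ = ∑ j, (if κ j = 0 then 1 else 0) := Finset.card_filter _ _
        _ = ∑ j, (if 1 ≤ κ j then 0 else 1) := by
            refine Finset.sum_congr rfl fun j _ => ?_
            by_cases hj : κ j = 0
            · simp [hj]
            · have h1 : 1 ≤ κ j := by omega
              simp [hj, h1]
    unfold rk at *
    omega
  -- membership of `∑ κ'` in the sigma set
  have hmem : (∑ j, κ' j) ∈ sigmaSet C n := by
    refine ⟨κ', fun j _ => le_max_right _ _, ?_, by simp⟩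
    rw [rank_Cuk_univ C n hκ'n]
    have : (∑ j ∈ Finset.univ, κ' j) = ∑ j, κ' j := rfl
    omega
  have := Nat.sInf_le hmem
  omega

/-- translation between the `Q` condition rows and the canonical row family. -/
lemma rows_cond_iff (C : Fin s → ℕ → Fin m → F) (n : ℕ) (u : Finset (Fin s)) (k : Fin s → ℕ)
    (z : Fin m → F) :
    (∀ p : (Σ j : Fin s, Fin (truncK u k n j)), rowsOf C (truncK u k n) p ⬝ᵥ z = 0)
      ↔ (∀ j ∈ u, ∀ i, i < min (k j) n → C j i ⬝ᵥ z = 0) := by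
  classical
  constructor
  · intro hp j hj i hi
    have h1 : truncK u k n j = min (k j) n := by unfold truncK; rw [if_pos hj]
    exact hp ⟨j, ⟨i, by omega⟩⟩
  · rintro hq ⟨j, i⟩
    by_cases hj : j ∈ u
    · have h1 : truncK u k n j = min (k j) n := by unfold truncK; rw [if_pos hj]
      have hi : (i : ℕ) < min (k j) n := by have := i.isLt; omega
      exact hq j hj i.val hi
    · exfalso
      have h1 : truncK u k n j = 0 := by unfold truncK; rw [if_neg hj]
      have := i.isLt
      omega

lemma lemU (C : Fin s → ℕ → Fin m → F) (n : ℕ) (hs : 0 < s) (hsm : s ≤ m) (hmn : m ≤ n)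
    (hm1 : sInf (sigmaSet C n) ≤ m + 1)
    (u : Finset (Fin s)) (hu : u.Nonempty) (k : Fin s → ℕ)
    (hQ : ∀ z : Fin m → F, (∀ j ∈ u, ∀ i, i < min (k j) n → C j i ⬝ᵥ z = 0) →
        (∑ j ∈ u, erow C n k j) ⬝ᵥ z = 0) :
    sInf (sigmaSet C n) ≤ (Cuk C n u k).rank + s := by
  classical
  have hn1 : 1 ≤ n := le_trans (le_trans hs hsm) hmn
  set t : Fin s → ℕ := truncK u k n with htdef
  have hteq : ∀ j, t j = if j ∈ u then min (k j) n else 0 := fun _ => rfl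
  have htn : ∀ j, t j ≤ n := by
    intro j; rw [hteq j]; split <;> omega
  have hρ : (Cuk C n u k).rank = rk C t := rank_Cuk_eq_rk C n u k
  set ρ := rk C t with hρdef
  rcases lt_or_ge ρ (∑ j, t j) with hlt | hge
  · -- rank deficient: truncate to ρ+1 rows
    obtain ⟨κ, hκt, hkS⟩ := exists_le_sum t (ρ + 1) (by omega)
    have hκn : ∀ j, κ j ≤ n := fun j => le_trans (hκt j) (htn j)
    have hdep : rk C κ < ∑ j, κ j := by
      have := rk_mono C hκt
      omega
    have h1 := sInf_le_of_dep C n hn1 hκn hdep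
    have hsupp1 : 1 ≤ (Finset.univ.filter fun j => 1 ≤ κ j).card := by
      have hex2 : ∃ j, 1 ≤ κ j := by
        by_contra hcon
        push_neg at hcon
        have h0 : ∑ j, κ j = 0 := Finset.sum_eq_zero fun j _ => by
          have := hcon j; omega
        omega
      obtain ⟨j, hj⟩ := hex2
      exact Finset.card_pos.2 ⟨j, Finset.mem_filter.2 ⟨Finset.mem_univ j, hj⟩⟩
    have hsupps : (Finset.univ.filter fun j => 1 ≤ κ j).card ≤ s := by
      have := Finset.card_filter_le Finset.univ (fun j => 1 ≤ κ j)
      simpa using this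
    omega
  · -- full rank
    by_cases hex : ∃ j ∈ u, n ≤ k j
    · -- some component saturated: ρ = m
      obtain ⟨j1, hj1u, hj1⟩ := hex
      have ht1 : t j1 = n := by
        rw [hteq j1, if_pos hj1u]; omega
      have h2 : n ≤ ∑ j, t j := ht1 ▸ Finset.single_le_sum (fun j _ => Nat.zero_le _)
        (Finset.mem_univ j1)
      have h3 : ρ ≤ m := rk_le_m C t
      omega
    · push_neg at hex
      -- all k j < n on u; use duality
      have htk : ∀ j ∈ u, t j = k j := by
        intro j hj
        rw [hteq j, if_pos hj]
        have := hex j hj; omega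
      have hE : (∑ j ∈ u, erow C n k j) ∈ span F (Set.range (rowsOf C t)) := by
        apply mem_span_of_forall_ker
        intro z hz
        exact hQ z ((rows_cond_iff C n u k z).1 hz)
      obtain ⟨j0, hj0u⟩ := hu
      set κp : Fin s → ℕ := fun j => if j ∈ u then k j + 1 else 0 with hκpdef
      have hκpeq : ∀ j, κp j = if j ∈ u then k j + 1 else 0 := fun _ => rfl
      have hκpn : ∀ j, κp j ≤ n := by
        intro j; rw [hκpeq j]; split
        · have := hex j (by assumption); omega
        · omega
      have herow : ∀ j ∈ u, erow C n k j = C j (k j) := by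
        intro j hj; unfold erow; rw [if_pos (hex j hj)]
      -- rank bound for the extended prefix
      have hrkp : rk C κp < ∑ j, κp j := by
        set extra : Finset (Fin m → F) := (u.erase j0).image (fun j => C j (k j)) with hex2
        have hsub : span F (Set.range (rowsOf C κp))
            ≤ span F (Set.range (rowsOf C t)) ⊔ span F (↑extra : Set (Fin m → F)) := by
          rw [span_le]
          rintro w ⟨⟨j, i⟩, rfl⟩
          have hju : j ∈ u := by
            by_contra hcon
            have h5 : (i : ℕ) < κp j := i.isLt
            have h6 : κp j = 0 := by rw [hκpeq j, if_neg hcon]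
            omega
          have hilt : (i : ℕ) < k j + 1 := by
            have h5 : (i : ℕ) < κp j := i.isLt
            have h6 : κp j = k j + 1 := by rw [hκpeq j, if_pos hju]
            omega
          rcases lt_or_ge (i : ℕ) (k j) with hik | hik
          · refine le_sup_left (α := Submodule F (Fin m → F)) (Submodule.subset_span ?_)
            exact ⟨⟨j, ⟨(i : ℕ), by rw [htk j hju]; exact hik⟩⟩, rfl⟩
          · have hieq : (i : ℕ) = k j := by omega
            have hw : rowsOf C κp ⟨j, i⟩ = C j (k j) := by
              unfold rowsOf; rw [hieq]
            rw [hw]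
            by_cases hjj0 : j = j0
            · subst hjj0
              -- C j (k j) = E - ∑ over erase
              have hC : C j (k j) = (∑ j' ∈ u, erow C n k j')
                  - ∑ j' ∈ u.erase j, erow C n k j' := by
                rw [← Finset.add_sum_erase u (fun j' => erow C n k j') hj0u]
                beta_reduce
                rw [herow j hj0u]
                abel
              rw [hC]
              apply Submodule.sub_mem
              · exact le_sup_left (α := Submodule F (Fin m → F)) hE
              · apply Submodule.sum_mem
                intro j' hj'
                have hj'u : j' ∈ u := Finset.mem_of_mem_erase hj'
                rw [herow j' hj'u]
                refine le_sup_right (α := Submodule F (Fin m → F)) (Submodule.subset_span ?_)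
                rw [hex2]
                simp only [Finset.coe_image, Set.mem_image, Finset.mem_coe]
                exact ⟨j', hj', rfl⟩
            · refine le_sup_right (α := Submodule F (Fin m → F)) (Submodule.subset_span ?_)
              rw [hex2]
              simp only [Finset.coe_image, Set.mem_image, Finset.mem_coe]
              exact ⟨j, Finset.mem_erase.2 ⟨hjj0, hju⟩, rfl⟩
        have h1 : rk C κp ≤ Module.finrank F
            ↥(span F (Set.range (rowsOf C t)) ⊔ span F (↑extra : Set (Fin m → F))) :=
          Submodule.finrank_mono hsub
        have h2 := finrank_sup_le' (span F (Set.range (rowsOf C t)))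
          (span F (↑extra : Set (Fin m → F)))
        have h3 := finrank_span_finset_le' extra
        have h4 : extra.card ≤ u.card - 1 := by
          calc extra.card ≤ (u.erase j0).card := Finset.card_image_le
            _ = u.card - 1 := Finset.card_erase_of_mem hj0u
        have hSkp : ∑ j, κp j = (∑ j ∈ u, k j) + u.card := by
          rw [Finset.sum_congr rfl fun j _ => hκpeq j, Finset.sum_ite_mem,
            Finset.univ_inter, Finset.sum_add_distrib]
          simp
        have hSt : ∑ j, t j = ∑ j ∈ u, k j := by
          rw [Finset.sum_congr rfl fun j _ => hteq j, Finset.sum_ite_mem, Finset.univ_inter]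
          exact Finset.sum_congr rfl fun j hj => by have := hex j hj; omega
        have hucard : 1 ≤ u.card := Finset.card_pos.2 ⟨j0, hj0u⟩
        have hrks : rk C t ≤ ∑ j, t j := rk_le_sum C t
        unfold rk at *
        omega
      have h5 := sInf_le_of_dep C n hn1 hκpn hrkp
      have hsupp : (Finset.univ.filter fun j => 1 ≤ κp j) = u := by
        ext j
        simp only [Finset.mem_filter, Finset.mem_univ, true_and]
        rw [hκpeq j]
        by_cases hj : j ∈ u <;> simp [hj]
      have hSkp : ∑ j, κp j = (∑ j ∈ u, k j) + u.card := by
        rw [Finset.sum_congr rfl fun j _ => hκpeq j, Finset.sum_ite_mem,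
          Finset.univ_inter, Finset.sum_add_distrib]
        simp
      have hSt : ∑ j, t j = ∑ j ∈ u, k j := by
        rw [Finset.sum_congr rfl fun j _ => hteq j, Finset.sum_ite_mem, Finset.univ_inter]
        exact Finset.sum_congr rfl fun j hj => by have := hex j hj; omega
      have hucard : u.card ≤ s := by
        have := Finset.card_le_card (Finset.subset_univ u)
        simpa using this
      have hrks : ρ ≤ ∑ j, t j := rk_le_sum C t
      rw [hsupp] at h5
      rw [hρ]
      omega

end SigmaMachinery
section AttainMain
open Matrix Module Submodule
variable {F : Type} [Field F] [Fintype F] {s m : ℕ}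

lemma sigma_sum_eq {s : ℕ} {M : Type} [AddCommMonoid M] (κ0 : Fin s → ℕ) (f : Fin s → ℕ → M) :
    (∑ p : Σ j : Fin s, Fin (κ0 j), f p.1 (p.2 : ℕ)) = ∑ j, ∑ i ∈ Finset.range (κ0 j), f j i := by
  rw [← Finset.univ_sigma_univ, Finset.sum_sigma]
  exact Finset.sum_congr rfl fun j _ => Fin.sum_univ_eq_sum_range (fun i => f j i) (κ0 j)

lemma mem_sigma_m1 (C : Fin s → ℕ → Fin m → F) (n : ℕ) (hs : 0 < s) (hsm : s ≤ m) :
    (m + 1) ∈ sigmaSet C n := by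
  classical
  set j0 : Fin s := ⟨0, hs⟩ with hj0def
  set k0 : Fin s → ℕ := fun j => if j = j0 then m + 2 - s else 1 with hk0
  have hk0eq : ∀ j, k0 j = if j = j0 then m + 2 - s else 1 := fun _ => rfl
  have hsum : ∑ j, k0 j = m + 1 := by
    have h1 : ∀ j : Fin s, k0 j = 1 + (if j = j0 then m + 1 - s else 0) := by
      intro j; rw [hk0eq j]; by_cases hj : j = j0
      · simp [hj]; omega
      · simp [hj]
    rw [Finset.sum_congr rfl fun j _ => h1 j, Finset.sum_add_distrib]
    rw [Finset.sum_const, Finset.card_univ, Fintype.card_fin, smul_eq_mul, mul_one]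
    rw [Finset.sum_ite_eq' Finset.univ j0 (fun _ => m + 1 - s)]
    simp only [Finset.mem_univ, if_true]
    omega
  have hne : (Cuk C n Finset.univ k0).rank ≠ ∑ j ∈ Finset.univ, k0 j := by
    have he2 : (Cuk C n Finset.univ k0).rank = rk C (truncK Finset.univ k0 n) :=
      rank_Cuk_eq_rk C n _ _
    have h3 := rk_le_m C (truncK Finset.univ k0 n)
    have h4 : (∑ j ∈ Finset.univ, k0 j) = m + 1 := hsum
    omega
  exact ⟨k0, fun j _ => by rw [hk0eq j]; split <;> omega, hne, hsum.symm⟩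

lemma s1_le_sInf (C : Fin s → ℕ → Fin m → F) (n : ℕ) (hs : 0 < s)
    (hfull : (Cuk C n Finset.univ (fun _ => 1)).rank = s)
    (hne : (sigmaSet C n).Nonempty) :
    s + 1 ≤ sInf (sigmaSet C n) := by
  classical
  obtain ⟨k, hk1, hkne, hkeq⟩ := Nat.sInf_mem hne
  rw [hkeq]
  have hks : s ≤ ∑ j ∈ Finset.univ, k j := by
    calc s = ∑ _j : Fin s, 1 := by simp
      _ ≤ ∑ j ∈ Finset.univ, k j := Finset.sum_le_sum fun j hj => hk1 j hj
  rcases Nat.lt_or_ge s (∑ j ∈ Finset.univ, k j) with h | h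
  · omega
  · exfalso
    have hsum : ∑ j ∈ Finset.univ, k j = s := by omega
    have hall : ∀ j, k j = 1 := by
      intro j
      by_contra hne2
      have hk2 : 2 ≤ k j := by have := hk1 j (Finset.mem_univ j); omega
      have h3 := Finset.add_sum_erase Finset.univ k (Finset.mem_univ j)
      have h4 : (∑ x ∈ Finset.univ.erase j, (1:ℕ)) ≤ ∑ x ∈ Finset.univ.erase j, k x :=
        Finset.sum_le_sum fun x _ => hk1 x (Finset.mem_univ x)
      have h5 : (∑ x ∈ Finset.univ.erase j, (1:ℕ)) = s - 1 := by
        rw [Finset.sum_const, smul_eq_mul, mul_one,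
          Finset.card_erase_of_mem (Finset.mem_univ j), Finset.card_univ, Fintype.card_fin]
      omega
    have hk : k = fun _ => 1 := funext hall
    rw [hk] at hkne
    apply hkne
    rw [hfull]
    simp

lemma attain (C : Fin s → ℕ → Fin m → F) (n : ℕ) (h2 : Fintype.card F = 2)
    (hs : 0 < s) (hsm : s ≤ m) (hmn : m ≤ n)
    (hne : (sigmaSet C n).Nonempty) :
    ∃ (u : Finset (Fin s)) (k : Fin s → ℕ), u.Nonempty ∧
      (∀ z : Fin m → F, (∀ j ∈ u, ∀ i, i < min (k j) n → C j i ⬝ᵥ z = 0) →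
        (∑ j ∈ u, erow C n k j) ⬝ᵥ z = 0) ∧
      (Cuk C n u k).rank + s ≤ sInf (sigmaSet C n) := by
  classical
  have hn1 : 1 ≤ n := by omega
  -- characterization of rank deficiency
  have hrklt : ∀ κ0 : Fin s → ℕ, ¬ LinearIndependent F (rowsOf C κ0) → rk C κ0 < ∑ j, κ0 j := by
    intro κ0 hnLI
    have hle := rk_le_sum C κ0
    rcases Nat.lt_or_ge (rk C κ0) (∑ j, κ0 j) with h | h
    · exact h
    · exfalso
      apply hnLI
      rw [linearIndependent_iff_card_eq_finrank_span]
      have hcard : Fintype.card (Σ j : Fin s, Fin (κ0 j)) = ∑ j, κ0 j := by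
        rw [Fintype.card_sigma]; simp
      have hfr : Set.finrank F (Set.range (rowsOf C κ0)) = rk C κ0 := rfl
      omega
  have hrkgt : ∀ κ0 : Fin s → ℕ, rk C κ0 < ∑ j, κ0 j → ¬ LinearIndependent F (rowsOf C κ0) := by
    intro κ0 hlt hLI
    have := linearIndependent_iff_card_eq_finrank_span.mp hLI
    have hcard : Fintype.card (Σ j : Fin s, Fin (κ0 j)) = ∑ j, κ0 j := by
      rw [Fintype.card_sigma]; simp
    have hfr : Set.finrank F (Set.range (rowsOf C κ0)) = rk C κ0 := rfl
    omega
  by_cases hPex : ∃ κ : Fin s → ℕ, (∀ j, κ j ≤ n) ∧ rk C κ < ∑ j, κ j ∧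
      (∑ j, κ j) + (s - (Finset.univ.filter fun j => 1 ≤ κ j).card) ≤ sInf (sigmaSet C n)
  · -- main case: a minimal dependent prefix exists
    set R : Set ℕ := {r | ∃ κ : Fin s → ℕ, ((∀ j, κ j ≤ n) ∧ rk C κ < ∑ j, κ j ∧
      (∑ j, κ j) + (s - (Finset.univ.filter fun j => 1 ≤ κ j).card) ≤ sInf (sigmaSet C n))
      ∧ ∑ j, κ j = r} with hRdef
    have hRne : R.Nonempty := by
      obtain ⟨κ, hκ⟩ := hPex
      exact ⟨∑ j, κ j, κ, hκ, rfl⟩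
    obtain ⟨κ, ⟨hκn, hκdep, hκpot⟩, hκμ⟩ := Nat.sInf_mem hRne
    -- minimality
    have hmin : ∀ κ' : Fin s → ℕ, (∀ j, κ' j ≤ κ j) → (∑ j, κ' j) < ∑ j, κ j →
        ¬ (rk C κ' < ∑ j, κ' j) := by
      intro κ' hle hlt hdep'
      have hpw : ∀ j, κ' j + (if 1 ≤ κ j then 1 else 0) ≤ κ j + (if 1 ≤ κ' j then 1 else 0) := by
        intro j
        have := hle j
        by_cases ha : 1 ≤ κ' j <;> by_cases hb : 1 ≤ κ j <;> simp [ha, hb] <;> omega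
      have hsum2 : (∑ j, κ' j) + ∑ j, (if 1 ≤ κ j then 1 else 0)
          ≤ (∑ j, κ j) + ∑ j, (if 1 ≤ κ' j then 1 else 0) := by
        rw [← Finset.sum_add_distrib, ← Finset.sum_add_distrib]
        exact Finset.sum_le_sum fun j _ => hpw j
      have hc1 : (Finset.univ.filter fun j => 1 ≤ κ j).card
          = ∑ j, (if 1 ≤ κ j then 1 else 0) := Finset.card_filter _ _
      have hc2 : (Finset.univ.filter fun j => 1 ≤ κ' j).card
          = ∑ j, (if 1 ≤ κ' j then 1 else 0) := Finset.card_filter _ _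
      have hcle1 : (Finset.univ.filter fun j => 1 ≤ κ j).card ≤ s := by
        have := Finset.card_le_card (Finset.filter_subset (fun j => 1 ≤ κ j) Finset.univ)
        simpa using this
      have hcle2 : (Finset.univ.filter fun j => 1 ≤ κ' j).card ≤ s := by
        have := Finset.card_le_card (Finset.filter_subset (fun j => 1 ≤ κ' j) Finset.univ)
        simpa using this
      have hpot' : (∑ j, κ' j) + (s - (Finset.univ.filter fun j => 1 ≤ κ' j).card)
          ≤ sInf (sigmaSet C n) := by omega
      have hmem : (∑ j, κ' j) ∈ R :=
        ⟨κ', ⟨fun j => le_trans (hle j) (hκn j), hdep', hpot'⟩, rfl⟩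
      have := Nat.sInf_le hmem
      omega
    -- extract a dependency
    obtain ⟨g, hg0, p0, hp0⟩ := Fintype.not_linearIndependent_iff.mp (hrkgt κ hκdep)
    set G : Fin s → ℕ → F := fun j i => if h : i < κ j then g ⟨j, ⟨i, h⟩⟩ else 0 with hGdef
    have hGeq : ∀ j i, G j i = if h : i < κ j then g ⟨j, ⟨i, h⟩⟩ else 0 := fun _ _ => rfl
    have hGg : ∀ (p : Σ j : Fin s, Fin (κ j)), G p.1 (p.2 : ℕ) = g p := by
      rintro ⟨j, i⟩
      rw [hGeq, dif_pos i.isLt]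
    have hg0' : ∑ j, ∑ i ∈ Finset.range (κ j), G j i • C j i = 0 := by
      rw [← sigma_sum_eq κ (fun j i => G j i • C j i)]
      rw [← hg0]
      apply Finset.sum_congr rfl
      rintro ⟨j, i⟩ _
      rw [hGg ⟨j, i⟩]
      rfl
    -- every top row occurs in the dependency
    have htop : ∀ j1 : Fin s, 1 ≤ κ j1 → G j1 (κ j1 - 1) ≠ 0 := by
      intro j1 hj1 htop0
      set κ' : Fin s → ℕ := fun j => if j = j1 then κ j - 1 else κ j with hκ'def
      have hκ'eq : ∀ j, κ' j = if j = j1 then κ j - 1 else κ j := fun _ => rfl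
      have hκ'le : ∀ j, κ' j ≤ κ j := by intro j; rw [hκ'eq j]; split <;> omega
      have hκ'lt : (∑ j, κ' j) < ∑ j, κ j := by
        apply Finset.sum_lt_sum (fun j _ => hκ'le j)
        exact ⟨j1, Finset.mem_univ j1, by rw [hκ'eq j1]; simp; omega⟩
      apply hmin κ' hκ'le hκ'lt
      apply hrklt
      rw [Fintype.not_linearIndependent_iff]
      refine ⟨fun p => G p.1 (p.2 : ℕ), ?_, ?_⟩
      · have hrw : (∑ p : Σ j : Fin s, Fin (κ' j), G p.1 (p.2 : ℕ) • rowsOf C κ' p)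
            = ∑ j, ∑ i ∈ Finset.range (κ' j), G j i • C j i :=
          sigma_sum_eq κ' (fun j i => G j i • C j i)
        rw [hrw, ← hg0']
        apply Finset.sum_congr rfl
        intro j _
        by_cases hj : j = j1
        · subst hj
          have he : κ' j = κ j - 1 := by rw [hκ'eq]; simp
          rw [he]
          have h6 : κ j = (κ j - 1) + 1 := by omega
          conv_rhs => rw [h6]
          rw [Finset.sum_range_succ, htop0, zero_smul, add_zero]
        · have he : κ' j = κ j := by rw [hκ'eq]; simp [hj]
          rw [he]
      · obtain ⟨j2, i2⟩ := p0
        have hg2 : G j2 (i2 : ℕ) ≠ 0 := by rw [hGg ⟨j2, i2⟩]; exact hp0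
        have hlt2 : (i2 : ℕ) < κ' j2 := by
          rw [hκ'eq j2]
          by_cases hj : j2 = j1
          · subst hj
            have he2 : (if j2 = j2 then κ j2 - 1 else κ j2) = κ j2 - 1 := if_pos rfl
            have hne3 : (i2 : ℕ) ≠ κ j2 - 1 := by
              intro heq
              apply hg2
              rw [heq]
              exact htop0
            have := i2.isLt
            omega
          · rw [if_neg hj]
            exact i2.isLt
        exact ⟨⟨j2, ⟨(i2 : ℕ), hlt2⟩⟩, hg2⟩
    -- construct the witness
    set u : Finset (Fin s) := Finset.univ.filter (fun j => 1 ≤ κ j) with hudef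
    set k : Fin s → ℕ := fun j => κ j - 1 with hkdef
    have hkeq : ∀ j, k j = κ j - 1 := fun _ => rfl
    have humem : ∀ j, j ∈ u ↔ 1 ≤ κ j := by
      intro j; rw [hudef]; simp
    have hune : u.Nonempty := by
      have hex2 : ∃ j, 1 ≤ κ j := by
        by_contra hcon
        push_neg at hcon
        have h0 : ∑ j, κ j = 0 := Finset.sum_eq_zero fun j _ => by have := hcon j; omega
        omega
      obtain ⟨j, hj⟩ := hex2
      exact ⟨j, (humem j).2 hj⟩
    have herow : ∀ j ∈ u, erow C n k j = C j (κ j - 1) := by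
      intro j hj
      have hκj := hκn j
      have h1κ : 1 ≤ κ j := (humem j).1 hj
      unfold erow
      rw [hkeq j, if_pos (by omega)]
    -- E lies in the span of the lower rows
    have hW : (∑ j ∈ u, C j (κ j - 1))
        = - ∑ j, ∑ i ∈ Finset.range (k j), G j i • C j i := by
      have hsplit : ∀ j : Fin s, (∑ i ∈ Finset.range (κ j), G j i • C j i)
          = (∑ i ∈ Finset.range (k j), G j i • C j i)
            + (if 1 ≤ κ j then G j (κ j - 1) • C j (κ j - 1) else 0) := by
        intro j
        by_cases hj : 1 ≤ κ j
        · rw [if_pos hj]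
          have h6 : κ j = (κ j - 1) + 1 := by omega
          conv_lhs => rw [h6]
          rw [Finset.sum_range_succ]
        · rw [if_neg hj]
          have h7 : κ j = 0 := by omega
          have h8 : k j = 0 := by rw [hkeq]; omega
          rw [h7, h8]
          simp
      have h9 := hg0'
      rw [Finset.sum_congr rfl fun j _ => hsplit j, Finset.sum_add_distrib] at h9
      have h10 : (∑ j, (if 1 ≤ κ j then G j (κ j - 1) • C j (κ j - 1) else 0))
          = ∑ j ∈ u, C j (κ j - 1) := by
        rw [hudef, Finset.sum_filter]
        apply Finset.sum_congr rfl
        intro j _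
        by_cases hj : 1 ≤ κ j
        · rw [if_pos hj, if_pos hj]
          have hg1 : G j (κ j - 1) = 1 :=
            (Fcases h2 _).resolve_left (htop j hj)
          rw [hg1, one_smul]
        · rw [if_neg hj, if_neg hj]
      rw [h10] at h9
      linear_combination (norm := module) h9
    have hEspan : (∑ j ∈ u, erow C n k j) ∈ span F (Set.range (rowsOf C k)) := by
      rw [Finset.sum_congr rfl herow, hW]
      apply Submodule.neg_mem
      apply Submodule.sum_mem
      intro j _
      apply Submodule.sum_mem
      intro i hi
      have hik : i < k j := Finset.mem_range.mp hi
      exact Submodule.smul_mem _ _ (Submodule.subset_span ⟨⟨j, ⟨i, hik⟩⟩, rfl⟩)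
    refine ⟨u, k, hune, ?_, ?_⟩
    · intro z hz
      apply dot_eq_zero_of_mem_span hEspan
      rintro v ⟨⟨j, i⟩, rfl⟩
      have hik : (i : ℕ) < k j := i.isLt
      have hkj : k j = κ j - 1 := rfl
      have hju : j ∈ u := (humem j).2 (by omega)
      have hκj := hκn j
      have himin : (i : ℕ) < min (k j) n := by omega
      exact hz j hju i.val himin
    · have hkn2 : ∀ j, truncK u k n j = k j := by
        intro j
        unfold truncK
        by_cases hj : j ∈ u
        · rw [if_pos hj]
          have := hκn j
          have : k j = κ j - 1 := rfl
          omega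
        · rw [if_neg hj]
          have hj' : ¬ 1 ≤ κ j := fun hcon => hj ((humem j).2 hcon)
          have : k j = κ j - 1 := rfl
          omega
      have hr1 : (Cuk C n u k).rank = rk C k := by
        rw [rank_Cuk_eq_rk]
        congr 1
        funext j
        exact hkn2 j
      have hr2 : rk C k ≤ ∑ j, k j := rk_le_sum C k
      have hsk : (∑ j, k j) + (Finset.univ.filter fun j => 1 ≤ κ j).card = ∑ j, κ j := by
        rw [Finset.card_filter, ← Finset.sum_add_distrib]
        refine Finset.sum_congr rfl fun j _ => ?_
        rw [hkeq j]
        by_cases hj : 1 ≤ κ j <;> simp [hj] <;> omega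
      have hcle1 : (Finset.univ.filter fun j => 1 ≤ κ j).card ≤ s := by
        have := Finset.card_le_card (Finset.filter_subset (fun j => 1 ≤ κ j) Finset.univ)
        simpa using this
      have hucf : u.card = (Finset.univ.filter fun j => 1 ≤ κ j).card := rfl
      omega
  · -- degenerate case
    obtain ⟨kst, hk1, hkne, hkeq⟩ := Nat.sInf_mem hne
    set t : Fin s → ℕ := fun j => min (kst j) n with htdef
    have hteq : ∀ j, t j = min (kst j) n := fun _ => rfl
    have htn : ∀ j, t j ≤ n := fun j => by rw [hteq j]; omega
    have ht1 : ∀ j, 1 ≤ t j := fun j => by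
      rw [hteq j]
      have := hk1 j (Finset.mem_univ j)
      omega
    have hrt : (Cuk C n Finset.univ kst).rank = rk C t := by
      rw [rank_Cuk_eq_rk]
      congr 1
      funext j
      unfold truncK
      rw [if_pos (Finset.mem_univ j)]
    have hfull_t : rk C t = ∑ j, t j := by
      rcases Nat.lt_or_ge (rk C t) (∑ j, t j) with hlt | hge2
      · exfalso
        apply hPex
        refine ⟨t, htn, hlt, ?_⟩
        have hsupp : (Finset.univ.filter fun j => 1 ≤ t j) = Finset.univ :=
          Finset.filter_true_of_mem (fun j _ => ht1 j)
        have hsumle : (∑ j, t j) ≤ ∑ j ∈ Finset.univ, kst j :=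
          Finset.sum_le_sum fun j _ => by rw [hteq j]; omega
        rw [hsupp, Finset.card_univ, Fintype.card_fin]
        omega
      · have := rk_le_sum C t
        omega
    have hstne : rk C t ≠ sInf (sigmaSet C n) := by
      rw [← hrt]
      omega
    have hj1ex : ∃ j1, t j1 < kst j1 := by
      by_contra hcon
      push_neg at hcon
      have hall : ∀ j, t j = kst j := fun j => le_antisymm (by rw [hteq j]; omega) (hcon j)
      have : ∑ j, t j = ∑ j ∈ Finset.univ, kst j := Finset.sum_congr rfl fun j _ => hall j
      omega
    obtain ⟨j1, hj1⟩ := hj1ex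
    have htj1 : t j1 = n := by
      have := hteq j1
      omega
    have hsum_ge : n + (s - 1) ≤ ∑ j, t j := by
      have h8 := Finset.add_sum_erase Finset.univ t (Finset.mem_univ j1)
      have h9 : (∑ x ∈ Finset.univ.erase j1, (1:ℕ)) ≤ ∑ x ∈ Finset.univ.erase j1, t x :=
        Finset.sum_le_sum fun x _ => ht1 x
      have h10 : (∑ x ∈ Finset.univ.erase j1, (1:ℕ)) = s - 1 := by
        rw [Finset.sum_const, smul_eq_mul, mul_one,
          Finset.card_erase_of_mem (Finset.mem_univ j1), Finset.card_univ, Fintype.card_fin]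
      omega
    have hrkm : rk C t ≤ m := rk_le_m C t
    have hs1 : s = 1 := by omega
    have hnm : n = m := by omega
    refine ⟨Finset.univ, fun _ => n, ⟨⟨0, hs⟩, Finset.mem_univ _⟩, ?_, ?_⟩
    · intro z hz
      have hzero : ∀ j ∈ Finset.univ, erow C n (fun _ => n) j = (0 : Fin m → F) := by
        intro j _
        unfold erow
        rw [if_neg (lt_irrefl n)]
      rw [Finset.sum_congr rfl hzero, Finset.sum_const_zero, zero_dotProduct]
    · have httop : t = fun _ => n := by
        funext j
        have hj : j = j1 := by
          apply Fin.ext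
          have := j.isLt
          have := j1.isLt
          omega
        rw [hj, htj1]
      have hr : (Cuk C n Finset.univ (fun _ => n)).rank = rk C t := by
        rw [rank_Cuk_eq_rk]
        congr 1
        funext j
        unfold truncK
        rw [if_pos (Finset.mem_univ j), httop]
        simp
      have h11 : kst j1 ≤ ∑ j ∈ Finset.univ, kst j :=
        Finset.single_le_sum (fun j _ => Nat.zero_le _) (Finset.mem_univ j1)
      omega

end AttainMain
/-- in base `2`, if `C_{1:s,1}` has full row rank, then the maximal gain
coefficient is `Γ = 2^{t*_{1:s}+s-1}`. -/
theorem stmt19 {F : Type} [Field F] [Fintype F] {s m : ℕ} (hs : 0 < s)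
    (h2 : Fintype.card F = 2)
    (φ : Fin (Fintype.card F) ≃ F) (hφ : φ ⟨0, Fintype.card_pos⟩ = 0)
    (C : Fin s → ℕ → Fin m → F) (n : ℕ) (hn : m ≤ n)
    (hfull : (Cuk C n Finset.univ (fun _ => 1)).rank = s) :
    IsGreatest
      {γ : ℝ | ∃ (u : Finset (Fin s)) (k : Fin s → ℕ), u.Nonempty ∧
        γ = gain (Fintype.card F) (Fintype.card F ^ m)
              (fun i j => dnet φ C n (i : ℕ) j) u k}
      ((2 : ℝ) ^ (tstar C n Finset.univ + (s : ℤ) - 1)) := by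
  classical
  have hsm : s ≤ m := by
    have h1 : (Cuk C n Finset.univ (fun _ => 1)).rank
        = rk C (truncK Finset.univ (fun _ => 1) n) := rank_Cuk_eq_rk C n _ _
    have h2' := rk_le_m C (truncK Finset.univ (fun _ => 1) n)
    omega
  have hm1mem := mem_sigma_m1 C n hs hsm
  have hsne : (sigmaSet C n).Nonempty := ⟨m + 1, hm1mem⟩
  have hm1 : sInf (sigmaSet C n) ≤ m + 1 := Nat.sInf_le hm1mem
  have hbig : s + 1 ≤ sInf (sigmaSet C n) := s1_le_sInf C n hs hfull hsne
  have hts : tstar C n Finset.univ = (m : ℤ) + 1 - (sInf (sigmaSet C n) : ℕ) :=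
    tstar_univ_eq C n
  have hexp : (2 : ℝ) ^ (tstar C n Finset.univ + (s : ℤ) - 1)
      = 2 ^ (m - (sInf (sigmaSet C n) - s)) := by
    rw [hts]
    have he : (m : ℤ) + 1 - (sInf (sigmaSet C n) : ℕ) + (s : ℤ) - 1
        = ((m - (sInf (sigmaSet C n) - s) : ℕ) : ℤ) := by omega
    rw [he, zpow_natCast]
  constructor
  · obtain ⟨u, k, hu, hQ, hrk⟩ := attain C n h2 hs hsm hn hsne
    have hge := lemU C n hs hsm hn hm1 u hu k hQ
    refine ⟨u, k, hu, ?_⟩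
    rw [gain_formula h2 φ C n u k, if_pos hQ, hexp]
    congr 1
    omega
  · rintro γ ⟨u, k, hu, rfl⟩
    rw [gain_formula h2 φ C n u k, hexp]
    split_ifs with hQ
    · have hge := lemU C n hs hsm hn hm1 u hu k hQ
      apply pow_le_pow_right₀ (by norm_num)
      omega
    · positivity
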